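/- For every integer n ≥ 1, Σ_{m=1}^{n} (m+n)(2n-m) = (13n³ - n)/6. Consequently, the Ricci curvature of Diff(S^1)/S^1 evaluated on the normalized basis satisfies Ric(L_n/√θ_n, L_{-n}/√θ_n) = -(13n³ - n)/(6 θ_n). -/

import Mathlib

/-- `θ_k = 2hk + (c/12)(k³ - k)` -/
noncomputable def th (c h : ℝ) (k : ℤ) : ℝ := 2 * h * k + c / 12 * ((k : ℝ) ^ 3 - k)

/-- `λ_{m,n} = (2n+m)θ_m / (2θ_{m+n})` -/
noncomputable def lam (c h : ℝ) (m n : ℤ) : ℝ :=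
  (2 * (n : ℝ) + m) * th c h m / (2 * th c h (m + n))

lemma sum_id_cast (k : ℕ) : ∑ m ∈ Finset.Icc 1 k, (m : ℝ) = k * (k + 1) / 2 := by
  induction k with
  | zero => simp
  | succ j ih =>
    rw [Finset.sum_Icc_succ_top (by omega), ih]
    push_cast
    ring

lemma sum_id (n : ℕ) :
    ∑ m ∈ Finset.Icc 1 n, ((m : ℝ) + n) * (2 * n - m) = (13 * (n : ℝ) ^ 3 - n) / 6 := by
  induction n with
  | zero => simp
  | succ k ih =>
    rw [Finset.sum_Icc_succ_top (by omega)]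
    have hcong : ∀ m ∈ Finset.Icc 1 k, ((m : ℝ) + (k + 1 : ℕ)) * (2 * (k + 1 : ℕ) - m)
        = ((m : ℝ) + k) * (2 * k - m) + ((m : ℝ) + 4 * k + 2) := by
      intro m _
      push_cast
      ring
    rw [Finset.sum_congr rfl hcong, Finset.sum_add_distrib, ih, Finset.sum_add_distrib,
      Finset.sum_add_distrib, sum_id_cast]
    simp [Nat.card_Icc]
    ring

/-- `Σ_{m=1}^{n} (m+n)(2n-m) = (13n³ - n)/6`; consequently the Ricci curvature of
`Diff(S¹)/S¹`, which after the telescoping cancellation of the `λ`-terms equals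
`-Σ_{m=1}^{n} ((m+n)(2n-m) + 2(m+2n)λ_{m,n})/θ_n + Σ_{m=1}^{n} 2(m+2n)λ_{m,n}/θ_n`,
satisfies `Ric(L_n/√θ_n, L_{-n}/√θ_n) = -(13n³-n)/(6θ_n)`. -/
theorem ricci_value (c h : ℝ) (hc : 0 < c) (hh : 0 < h) (n : ℕ) (hn : 1 ≤ n)
    (Ric : ℝ)
    (hRic : Ric =
      -(∑ m ∈ Finset.Icc 1 n,
          (((m : ℝ) + n) * (2 * n - m) + 2 * ((m : ℝ) + 2 * n) * lam c h m n)) / th c h n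
        + (∑ m ∈ Finset.Icc 1 n, 2 * ((m : ℝ) + 2 * n) * lam c h m n) / th c h n) :
    (∑ m ∈ Finset.Icc 1 n, ((m : ℝ) + n) * (2 * n - m) = (13 * (n : ℝ) ^ 3 - n) / 6) ∧
    Ric = -(13 * (n : ℝ) ^ 3 - n) / (6 * th c h n) := by
  have hs := sum_id n
  refine ⟨hs, ?_⟩
  rw [hRic, Finset.sum_add_distrib, hs]
  have hn1 : (1:ℝ) ≤ (n:ℝ) := by exact_mod_cast hn
  have hth : th c h (n : ℤ) ≠ 0 := by
    have h3 : (0:ℝ) ≤ (n:ℝ)^3 - n := by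
      nlinarith [mul_nonneg (mul_nonneg (by linarith : (0:ℝ) ≤ (n:ℝ)) (by linarith : (0:ℝ) ≤ (n:ℝ)-1)) (by linarith : (0:ℝ) ≤ (n:ℝ)+1)]
    have h4 : (0:ℝ) ≤ c/12*((n:ℝ)^3-n) := mul_nonneg (by positivity) h3
    have h5 : (0:ℝ) < 2*h*(n:ℝ) := by positivity
    have : (0:ℝ) < th c h (n : ℤ) := by
      simp only [th]
      push_cast
      linarith
    linarith
  rw [← add_div]
  field_simp
  ring
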